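/- Let p_1 and p_3 be odd primes with p_1 ≡ 1 (mod 4) and p_3 ≡ 3 (mod 4). Then the number of equivalence classes (under x ↦ x+t) of integer quadratics f = ax^2+bx+c with a(b^2-4ac) = p_1·p_3 and b^2-4ac > 0 equals 5 + (p_1/p_3), where (p_1/p_3) is the Legendre symbol. -/
import Mathlib


/-- The superdiscriminant `I(f) = a*(b^2 - 4*a*c)` of the integer quadratic
polynomial `f(x) = a*x^2 + b*x + c`, encoded as the triple `(a, b, c)`. -/
def superdisc (p : ℤ × ℤ × ℤ) : ℤ := p.1 * (p.2.1 ^ 2 - 4 * p.1 * p.2.2)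

/-- Equivalence of integer quadratics under the substitution `x ↦ x + t`, `t ∈ ℤ`:
`a*(x+t)^2 + b*(x+t) + c = a*x^2 + (b + 2*a*t)*x + (a*t^2 + b*t + c)`. -/
def quadEquiv (p q : ℤ × ℤ × ℤ) : Prop :=
  ∃ t : ℤ, q = (p.1, p.2.1 + 2 * p.1 * t, p.1 * t ^ 2 + p.2.1 * t + p.2.2)

/-- The number of equivalence classes (under `x ↦ x + t`) of integer quadratics
with superdiscriminant `n` satisfying the extra condition `P`. -/
noncomputable def quadCount (n : ℤ) (P : ℤ × ℤ × ℤ → Prop) : ℕ :=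
  Nat.card (Quot (fun p q : {p : ℤ × ℤ × ℤ // superdisc p = n ∧ P p} =>
    quadEquiv p.1 q.1))

lemma quadEquiv_refl (p : ℤ × ℤ × ℤ) : quadEquiv p p :=
  ⟨0, by obtain ⟨a, b, c⟩ := p; simp⟩

lemma quadEquiv_symm {p q : ℤ × ℤ × ℤ} (h : quadEquiv p q) : quadEquiv q p := by
  obtain ⟨a, b, c⟩ := p
  obtain ⟨t, rfl⟩ := h
  refine ⟨-t, ?_⟩
  simp only [Prod.mk.injEq]
  exact ⟨trivial, by ring, by ring⟩

lemma quadEquiv_trans {p q s : ℤ × ℤ × ℤ} (h : quadEquiv p q) (h' : quadEquiv q s) :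
    quadEquiv p s := by
  obtain ⟨a, b, c⟩ := p
  obtain ⟨t, rfl⟩ := h
  obtain ⟨u, rfl⟩ := h'
  refine ⟨t + u, ?_⟩
  simp only [Prod.mk.injEq]
  exact ⟨trivial, by ring, by ring⟩

lemma quadEquiv_of {a b c b' c' : ℤ} (ha : a ≠ 0)
    (hd : b ^ 2 - 4 * a * c = b' ^ 2 - 4 * a * c') (hb : 2 * a ∣ b' - b) :
    quadEquiv (a, b, c) (a, b', c') := by
  obtain ⟨t, ht⟩ := hb
  have hb' : b' = b + 2 * a * t := by linarith
  refine ⟨t, ?_⟩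
  have h4a : (4 : ℤ) * a ≠ 0 := mul_ne_zero (by norm_num) ha
  have hc4 : 4 * a * c' = 4 * a * (a * t ^ 2 + b * t + c) := by
    rw [hb'] at hd; linear_combination hd
  have hc' : c' = a * t ^ 2 + b * t + c := mul_left_cancel₀ h4a hc4
  simp only [Prod.mk.injEq]
  exact ⟨trivial, hb'.symm ▸ rfl, hc'.symm ▸ rfl⟩

lemma quadEquiv_of' {u v : ℤ × ℤ × ℤ} (ha : u.1 ≠ 0) (h1 : u.1 = v.1)
    (hd : u.2.1 ^ 2 - 4 * u.1 * u.2.2 = v.2.1 ^ 2 - 4 * v.1 * v.2.2)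
    (hb : 2 * u.1 ∣ v.2.1 - u.2.1) : quadEquiv u v := by
  obtain ⟨a, b, c⟩ := u
  obtain ⟨a', b', c'⟩ := v
  dsimp at *
  subst h1
  exact quadEquiv_of ha hd hb

lemma divisors_of_mul_primes {p q n : ℕ} (hp : p.Prime) (hq : q.Prime)
    (h : n ∣ p * q) : n = 1 ∨ n = p ∨ n = q ∨ n = p * q := by
  by_cases hpn : p ∣ n
  · obtain ⟨m, rfl⟩ := hpn
    have hm : m ∣ q := (Nat.mul_dvd_mul_iff_left hp.pos).mp h
    rcases hq.eq_one_or_self_of_dvd m hm with rfl | rfl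
    · exact Or.inr (Or.inl (by simp))
    · exact Or.inr (Or.inr (Or.inr rfl))
  · have hco : n.Coprime p := ((Nat.Prime.coprime_iff_not_dvd hp).mpr hpn).symm
    have : n ∣ q := hco.dvd_of_dvd_mul_left h
    rcases hq.eq_one_or_self_of_dvd n this with rfl | rfl
    · exact Or.inl rfl
    · exact Or.inr (Or.inr (Or.inl rfl))

lemma exists_odd_cast {n : ℕ} [NeZero n] (hn : Nat.Coprime 2 n) (x : ZMod n) :
    ∃ b : ℤ, Odd b ∧ (b : ZMod n) = x := by
  obtain ⟨k, h2, hn'⟩ := Nat.chineseRemainder hn 1 x.val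
  refine ⟨(k : ℤ), ?_, ?_⟩
  · have : k % 2 = 1 := by simpa [Nat.ModEq] using h2
    exact ⟨(k / 2 : ℕ), by omega⟩
  · have h := (ZMod.natCast_eq_natCast_iff _ _ _).mpr hn'
    push_cast
    rw [h, ZMod.natCast_val, ZMod.cast_id]

lemma exists_odd_cast₂ {m n : ℕ} [NeZero m] [NeZero n] (h2m : Nat.Coprime 2 m)
    (h2n : Nat.Coprime 2 n) (hmn : Nat.Coprime m n) (x : ZMod m) (y : ZMod n) :
    ∃ b : ℤ, Odd b ∧ (b : ZMod m) = x ∧ (b : ZMod n) = y := by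
  obtain ⟨k₁, hx, hy⟩ := Nat.chineseRemainder hmn x.val y.val
  obtain ⟨k, h2, hk⟩ := Nat.chineseRemainder (h2m.mul_right h2n) 1 k₁
  have hkm : k ≡ x.val [MOD m] := (hk.of_dvd (Dvd.intro n rfl)).trans hx
  have hkn : k ≡ y.val [MOD n] := (hk.of_dvd (Dvd.intro_left m rfl)).trans hy
  refine ⟨(k : ℤ), ?_, ?_, ?_⟩
  · have : k % 2 = 1 := by simpa [Nat.ModEq] using h2
    exact ⟨(k / 2 : ℕ), by omega⟩
  · have h := (ZMod.natCast_eq_natCast_iff _ _ _).mpr hkm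
    push_cast
    rw [h, ZMod.natCast_val, ZMod.cast_id]
  · have h := (ZMod.natCast_eq_natCast_iff _ _ _).mpr hkn
    push_cast
    rw [h, ZMod.natCast_val, ZMod.cast_id]

/-- For primes `p₁ ≡ 1 (mod 4)` and `p₃ ≡ 3 (mod 4)`, the number of classes of
integer quadratics with superdiscriminant `p₁·p₃` and positive discriminant is
`5 + (p₁/p₃)` (Legendre symbol). -/
theorem quad_count_pos_legendre (p₁ p₃ : ℕ) (hp₁ : p₁.Prime) (hp₃ : p₃.Prime)
    (h₁ : p₁ % 4 = 1) (h₃ : p₃ % 4 = 3) :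
    (quadCount ((p₁ : ℤ) * (p₃ : ℤ))
        (fun p => 0 < p.2.1 ^ 2 - 4 * p.1 * p.2.2) : ℤ)
    = 5 + @legendreSym p₃ ⟨hp₃⟩ (p₁ : ℤ) := by
  haveI F₁ : Fact p₁.Prime := ⟨hp₁⟩
  haveI F₃ : Fact p₃.Prime := ⟨hp₃⟩
  haveI : NeZero p₁ := ⟨hp₁.pos.ne'⟩
  haveI : NeZero p₃ := ⟨hp₃.pos.ne'⟩
  haveI : NeZero (p₁ * p₃) := ⟨Nat.mul_ne_zero hp₁.pos.ne' hp₃.pos.ne'⟩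
  have hp₁2 : p₁ ≠ 2 := by omega
  have hp₃2 : p₃ ≠ 2 := by omega
  have hp₁1 : 1 < p₁ := hp₁.one_lt
  have hp₃1 : 1 < p₃ := hp₃.one_lt
  have hne : p₁ ≠ p₃ := by omega
  have co2p₁ : Nat.Coprime 2 p₁ := (Nat.coprime_primes Nat.prime_two hp₁).mpr hp₁2.symm
  have co2p₃ : Nat.Coprime 2 p₃ := (Nat.coprime_primes Nat.prime_two hp₃).mpr hp₃2.symm
  have co13 : Nat.Coprime p₁ p₃ := (Nat.coprime_primes hp₁ hp₃).mpr hne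
  have co2m : Nat.Coprime 2 (p₁ * p₃) := co2p₁.mul_right co2p₃
  have ic2p₃ : IsCoprime (2 : ℤ) (p₃ : ℤ) := by
    exact_mod_cast Nat.isCoprime_iff_coprime.mpr co2p₃
  have ic4p₃ : IsCoprime (4 : ℤ) (p₃ : ℤ) := by
    have h := Nat.isCoprime_iff_coprime.mpr (Nat.Coprime.pow_left 2 co2p₃)
    norm_num at h
    exact_mod_cast h
  have ic2m : IsCoprime (2 : ℤ) ((p₁ : ℤ) * (p₃ : ℤ)) := by
    have h := Nat.isCoprime_iff_coprime.mpr co2m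
    push_cast at h
    exact_mod_cast h
  have ic4m : IsCoprime (4 : ℤ) ((p₁ : ℤ) * (p₃ : ℤ)) := by
    have h := Nat.isCoprime_iff_coprime.mpr (Nat.Coprime.pow_left 2 co2m)
    norm_num at h
    exact_mod_cast h
  have ic13 : IsCoprime ((p₁ : ℤ)) ((p₃ : ℤ)) := Nat.isCoprime_iff_coprime.mpr co13
  set N : ℤ := (p₁ : ℤ) * (p₃ : ℤ) with hN
  have hNpos : 0 < N := by positivity
  -- the subtype and relation
  set S := {p : ℤ × ℤ × ℤ // superdisc p = N ∧
    (fun p : ℤ × ℤ × ℤ => 0 < p.2.1 ^ 2 - 4 * p.1 * p.2.2) p} with hS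
  set r : S → S → Prop := fun p q => quadEquiv p.1 q.1 with hr
  have req : Equivalence r :=
    ⟨fun u => quadEquiv_refl _, fun h => quadEquiv_symm h, fun h h' => quadEquiv_trans h h'⟩
  -- construction for a = p₃
  have H1 : ∀ x : {x : ZMod p₃ // x ^ 2 = ((p₁ : ℤ) : ZMod p₃)},
      ∃ u : ℤ × ℤ × ℤ, u.1 = (p₃ : ℤ) ∧ Odd u.2.1 ∧ ((u.2.1 : ZMod p₃) = x.1) ∧
        u.2.1 ^ 2 - 4 * u.1 * u.2.2 = (p₁ : ℤ) := by
    intro x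
    obtain ⟨b, hodd, hcast⟩ := exists_odd_cast co2p₃ x.1
    have h4 : (4 : ℤ) ∣ b ^ 2 - (p₁ : ℤ) := by
      obtain ⟨j, hj⟩ := hodd
      obtain ⟨l, hl⟩ : ∃ l, p₁ = 4 * l + 1 := ⟨p₁ / 4, by omega⟩
      exact ⟨j ^ 2 + j - l, by rw [hj]; push_cast [hl]; ring⟩
    have hp3d : ((p₃ : ℤ)) ∣ b ^ 2 - (p₁ : ℤ) := by
      have hz : ((b ^ 2 - (p₁ : ℤ) : ℤ) : ZMod p₃) = 0 := by
        have hx2 := x.2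
        push_cast at hx2 ⊢
        rw [hcast, hx2]
        ring
      exact (ZMod.intCast_zmod_eq_zero_iff_dvd _ p₃).mp hz
    have hdvd : (4 * (p₃ : ℤ)) ∣ b ^ 2 - (p₁ : ℤ) := ic4p₃.mul_dvd h4 hp3d
    obtain ⟨c, hc⟩ := hdvd
    exact ⟨((p₃ : ℤ), b, c), rfl, hodd, hcast, by linarith⟩
  -- construction for a = p₁ * p₃
  have H2 : ∀ (y : {x : ZMod p₁ // x ^ 2 = ((1 : ℤ) : ZMod p₁)} ×
      {x : ZMod p₃ // x ^ 2 = ((1 : ℤ) : ZMod p₃)}),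
      ∃ u : ℤ × ℤ × ℤ, u.1 = N ∧ Odd u.2.1 ∧ ((u.2.1 : ZMod p₁) = y.1.1) ∧
        ((u.2.1 : ZMod p₃) = y.2.1) ∧ u.2.1 ^ 2 - 4 * u.1 * u.2.2 = 1 := by
    intro y
    obtain ⟨b, hodd, hcast₁, hcast₃⟩ := exists_odd_cast₂ co2p₁ co2p₃ co13 y.1.1 y.2.1
    have h4 : (4 : ℤ) ∣ b ^ 2 - 1 := by
      obtain ⟨j, hj⟩ := hodd
      exact ⟨j ^ 2 + j, by rw [hj]; ring⟩
    have hd₁ : ((p₁ : ℤ)) ∣ b ^ 2 - 1 := by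
      have hz : ((b ^ 2 - 1 : ℤ) : ZMod p₁) = 0 := by
        have hy2 := y.1.2
        push_cast at hy2 ⊢
        rw [hcast₁, hy2]
        ring
      exact (ZMod.intCast_zmod_eq_zero_iff_dvd _ p₁).mp hz
    have hd₃ : ((p₃ : ℤ)) ∣ b ^ 2 - 1 := by
      have hz : ((b ^ 2 - 1 : ℤ) : ZMod p₃) = 0 := by
        have hy2 := y.2.2
        push_cast at hy2 ⊢
        rw [hcast₃, hy2]
        ring
      exact (ZMod.intCast_zmod_eq_zero_iff_dvd _ p₃).mp hz
    have hdvd : (4 * N) ∣ b ^ 2 - 1 := by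
      rw [hN]
      exact ic4m.mul_dvd h4 (ic13.mul_dvd hd₁ hd₃)
    obtain ⟨c, hc⟩ := hdvd
    exact ⟨(N, b, c), rfl, hodd, hcast₁, hcast₃, by linarith⟩
  choose u1 hu1a hu1odd hu1cast hu1d using H1
  choose u2 hu2a hu2odd hu2cast₁ hu2cast₃ hu2d using H2
  have hp₃pos : (0 : ℤ) < (p₃ : ℤ) := by exact_mod_cast hp₃.pos
  have hp₁pos : (0 : ℤ) < (p₁ : ℤ) := by exact_mod_cast hp₁.pos
  have S₁ : ∀ x, superdisc (u1 x) = N ∧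
      (fun p : ℤ × ℤ × ℤ => 0 < p.2.1 ^ 2 - 4 * p.1 * p.2.2) (u1 x) := by
    intro x
    constructor
    · show (u1 x).1 * _ = N
      rw [hu1d x, hu1a x, hN]; ring
    · show 0 < _
      rw [hu1d x]; exact hp₁pos
  have S₂ : ∀ y, superdisc (u2 y) = N ∧
      (fun p : ℤ × ℤ × ℤ => 0 < p.2.1 ^ 2 - 4 * p.1 * p.2.2) (u2 y) := by
    intro y
    constructor
    · show (u2 y).1 * _ = N
      rw [hu2d y, hu2a y]; ring
    · show 0 < _
      rw [hu2d y]; norm_num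
  set g : ({x : ZMod p₃ // x ^ 2 = ((p₁ : ℤ) : ZMod p₃)} ⊕
      ({x : ZMod p₁ // x ^ 2 = ((1 : ℤ) : ZMod p₁)} ×
       {x : ZMod p₃ // x ^ 2 = ((1 : ℤ) : ZMod p₃)})) → Quot r :=
    Sum.elim (fun x => Quot.mk r ⟨u1 x, S₁ x⟩) (fun y => Quot.mk r ⟨u2 y, S₂ y⟩) with hg
  have key : ∀ {u v : S}, Quot.mk r u = Quot.mk r v → quadEquiv u.1 v.1 :=
    fun h => (req.eqvGen_iff).mp (Quot.eq.mp h)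
  have hNnep₃ : N ≠ (p₃ : ℤ) := by
    intro hcon
    have h1 : (p₁ : ℤ) * (p₃ : ℤ) = 1 * (p₃ : ℤ) := by rw [← hN, hcon]; ring
    have h2 : (p₁ : ℤ) = 1 := mul_right_cancel₀ hp₃pos.ne' h1
    have : p₁ = 1 := by exact_mod_cast h2
    omega
  have hinj : Function.Injective g := by
    intro z w h
    cases z with
    | inl x =>
      cases w with
      | inl x' =>
        simp only [hg, Sum.elim_inl] at h
        obtain ⟨t, ht⟩ := key h
        have hb' : (u1 x').2.1 = (u1 x).2.1 + 2 * (u1 x).1 * t := congrArg (fun v : ℤ × ℤ × ℤ => v.2.1) ht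
        have hcc : ((u1 x').2.1 : ZMod p₃) = ((u1 x).2.1 : ZMod p₃) := by
          rw [hb', hu1a x]
          push_cast
          simp [ZMod.natCast_self]
        congr 1
        apply Subtype.ext
        rw [← hu1cast x, ← hu1cast x', hcc]
      | inr y' =>
        exfalso
        simp only [hg, Sum.elim_inl, Sum.elim_inr] at h
        obtain ⟨t, ht⟩ := key h
        have ha' : (u2 y').1 = (u1 x).1 := by
          have h' := congrArg (fun v : ℤ × ℤ × ℤ => v.1) ht
          exact h'
        rw [hu2a y', hu1a x] at ha'
        exact hNnep₃ ha'
    | inr y =>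
      cases w with
      | inl x' =>
        exfalso
        simp only [hg, Sum.elim_inl, Sum.elim_inr] at h
        obtain ⟨t, ht⟩ := key h
        have ha' : (u1 x').1 = (u2 y).1 := by
          have h' := congrArg (fun v : ℤ × ℤ × ℤ => v.1) ht
          exact h'
        rw [hu2a y, hu1a x'] at ha'
        exact hNnep₃ ha'.symm
      | inr y' =>
        simp only [hg, Sum.elim_inr] at h
        obtain ⟨t, ht⟩ := key h
        have hb' : (u2 y').2.1 = (u2 y).2.1 + 2 * (u2 y).1 * t := congrArg (fun v : ℤ × ℤ × ℤ => v.2.1) ht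
        rw [hu2a y, hN] at hb'
        have hcc₁ : ((u2 y').2.1 : ZMod p₁) = ((u2 y).2.1 : ZMod p₁) := by
          rw [hb']
          push_cast
          simp [ZMod.natCast_self]
        have hcc₃ : ((u2 y').2.1 : ZMod p₃) = ((u2 y).2.1 : ZMod p₃) := by
          rw [hb']
          push_cast
          simp [ZMod.natCast_self]
        congr 1
        apply Prod.ext
        · apply Subtype.ext
          rw [← hu2cast₁ y, ← hu2cast₁ y', hcc₁]
        · apply Subtype.ext
          rw [← hu2cast₃ y, ← hu2cast₃ y', hcc₃]
  have hsurj : Function.Surjective g := by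
    apply Quot.ind
    intro s
    obtain ⟨⟨a, b, c⟩, hsd, hpos⟩ := s
    have hsd' : a * (b ^ 2 - 4 * a * c) = N := hsd
    have hpos' : (0 : ℤ) < b ^ 2 - 4 * a * c := hpos
    have hapos : 0 < a := by nlinarith [hNpos]
    obtain ⟨s4, hs4⟩ : ∃ s : ℤ, b ^ 2 = s := ⟨_, rfl⟩
    have hbpar : (4 : ℤ) ∣ s4 ∨ (4 : ℤ) ∣ s4 - 1 := by
      rcases Int.even_or_odd b with ⟨j, hj⟩ | ⟨j, hj⟩
      · exact Or.inl ⟨j ^ 2, by rw [← hs4, hj]; ring⟩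
      · exact Or.inr ⟨j ^ 2 + j, by rw [← hs4, hj]; ring⟩
    have hadvd : a.toNat ∣ p₁ * p₃ := by
      have h1 : a = (a.toNat : ℤ) := (Int.toNat_of_nonneg hapos.le).symm
      have h2 : (a.toNat : ℤ) ∣ ((p₁ * p₃ : ℕ) : ℤ) := by
        push_cast
        rw [← hN, ← h1]
        exact ⟨_, hsd'.symm⟩
      exact_mod_cast h2
    have hcast : a = (a.toNat : ℤ) := (Int.toNat_of_nonneg hapos.le).symm
    rcases divisors_of_mul_primes hp₁ hp₃ hadvd with h | h | h | h
    · -- a = 1 : impossible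
      exfalso
      have ha1 : a = 1 := by rw [hcast, h]; norm_num
      have hD : b ^ 2 - 4 * c = ((p₁ * p₃ : ℕ) : ℤ) := by
        rw [ha1] at hsd'
        push_cast
        rw [← hN]
        linarith
      have hm : (p₁ * p₃) % 4 = 3 := by rw [Nat.mul_mod, h₁, h₃]
      have hkey : s4 - 4 * c = ((p₁ * p₃ : ℕ) : ℤ) := by rw [← hs4]; linarith
      omega
    · -- a = p₁ : impossible
      exfalso
      have ha1 : a = (p₁ : ℤ) := by rw [hcast, h]
      have hD : b ^ 2 - 4 * ((p₁ : ℤ) * c) = (p₃ : ℤ) := by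
        rw [ha1] at hsd'
        have h' : (p₁ : ℤ) * (b ^ 2 - 4 * (p₁ : ℤ) * c) = (p₁ : ℤ) * (p₃ : ℤ) := hsd'.trans hN
        have := mul_left_cancel₀ (show (p₁ : ℤ) ≠ 0 from by positivity) h'
        linarith [this]
      obtain ⟨K, hK⟩ : ∃ K : ℤ, (p₁ : ℤ) * c = K := ⟨_, rfl⟩
      have hkey : s4 - 4 * K = (p₃ : ℤ) := by rw [← hs4, ← hK]; linarith
      omega
    · -- a = p₃
      have ha1 : a = (p₃ : ℤ) := by rw [hcast, h]
      have hD : b ^ 2 - 4 * (p₃ : ℤ) * c = (p₁ : ℤ) := by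
        rw [ha1] at hsd'
        have := mul_left_cancel₀ (show (p₃ : ℤ) ≠ 0 from by positivity)
          (by rw [hsd', hN]; ring : (p₃ : ℤ) * (b ^ 2 - 4 * (p₃ : ℤ) * c) = (p₃ : ℤ) * (p₁ : ℤ))
        linarith [this]
      have hbodd : Odd b := by
        rcases Int.even_or_odd b with ⟨j, hj⟩ | hodd
        · exfalso
          have h4 : (4 : ℤ) ∣ s4 := ⟨j ^ 2, by rw [← hs4, hj]; ring⟩
          obtain ⟨K, hK⟩ : ∃ K : ℤ, (p₃ : ℤ) * c = K := ⟨_, rfl⟩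
          have hkey : s4 - 4 * K = (p₁ : ℤ) := by rw [← hs4, ← hK]; linarith
          omega
        · exact hodd
      have hxp : ((b : ZMod p₃)) ^ 2 = ((p₁ : ℤ) : ZMod p₃) := by
        have hc := congrArg (fun z : ℤ => (z : ZMod p₃)) hD
        push_cast at hc ⊢
        simpa [ZMod.natCast_self] using hc
      set x : {x : ZMod p₃ // x ^ 2 = ((p₁ : ℤ) : ZMod p₃)} := ⟨(b : ZMod p₃), hxp⟩ with hx
      refine ⟨Sum.inl x, ?_⟩
      simp only [hg, Sum.elim_inl]
      apply Quot.sound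
      show quadEquiv (u1 x) (a, b, c)
      apply quadEquiv_of'
      · rw [hu1a x]; positivity
      · rw [hu1a x, ha1]
      · rw [hu1d x]
        dsimp only
        rw [ha1]
        linarith [hD]
      · rw [hu1a x]
        have h2 : (2 : ℤ) ∣ b - (u1 x).2.1 := by
          obtain ⟨j1, e1⟩ := hbodd
          obtain ⟨j2, e2⟩ := hu1odd x
          exact ⟨j1 - j2, by omega⟩
        have h3 : ((p₃ : ℤ)) ∣ b - (u1 x).2.1 := by
          apply (ZMod.intCast_zmod_eq_zero_iff_dvd _ p₃).mp
          push_cast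
          rw [hu1cast x, hx]
          ring
        exact ic2p₃.mul_dvd h2 h3
    · -- a = p₁ * p₃
      have ha1 : a = N := by rw [hcast, h]; push_cast [hN]; ring
      have hD : b ^ 2 - 4 * N * c = 1 := by
        rw [ha1] at hsd'
        have := mul_left_cancel₀ hNpos.ne'
          (by rw [hsd']; ring : N * (b ^ 2 - 4 * N * c) = N * 1)
        linarith [this]
      have hbodd : Odd b := by
        rcases Int.even_or_odd b with ⟨j, hj⟩ | hodd
        · exfalso
          have h4 : (4 : ℤ) ∣ s4 := ⟨j ^ 2, by rw [← hs4, hj]; ring⟩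
          obtain ⟨K, hK⟩ : ∃ K : ℤ, N * c = K := ⟨_, rfl⟩
          have hkey : s4 - 4 * K = 1 := by rw [← hs4, ← hK]; linarith
          omega
        · exact hodd
      have hx1 : ((b : ZMod p₁)) ^ 2 = ((1 : ℤ) : ZMod p₁) := by
        have hc := congrArg (fun z : ℤ => (z : ZMod p₁)) hD
        push_cast [hN] at hc ⊢
        simpa [ZMod.natCast_self] using hc
      have hx3 : ((b : ZMod p₃)) ^ 2 = ((1 : ℤ) : ZMod p₃) := by
        have hc := congrArg (fun z : ℤ => (z : ZMod p₃)) hD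
        push_cast [hN] at hc ⊢
        simpa [ZMod.natCast_self] using hc
      set y : {x : ZMod p₁ // x ^ 2 = ((1 : ℤ) : ZMod p₁)} ×
          {x : ZMod p₃ // x ^ 2 = ((1 : ℤ) : ZMod p₃)} :=
        (⟨(b : ZMod p₁), hx1⟩, ⟨(b : ZMod p₃), hx3⟩) with hy
      refine ⟨Sum.inr y, ?_⟩
      simp only [hg, Sum.elim_inr]
      apply Quot.sound
      show quadEquiv (u2 y) (a, b, c)
      apply quadEquiv_of'
      · rw [hu2a y]; exact hNpos.ne'
      · rw [hu2a y, ha1]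
      · rw [hu2d y]
        dsimp only
        rw [ha1]
        linarith [hD]
      · rw [hu2a y]
        have h2 : (2 : ℤ) ∣ b - (u2 y).2.1 := by
          obtain ⟨j1, e1⟩ := hbodd
          obtain ⟨j2, e2⟩ := hu2odd y
          exact ⟨j1 - j2, by omega⟩
        have hd1 : ((p₁ : ℤ)) ∣ b - (u2 y).2.1 := by
          apply (ZMod.intCast_zmod_eq_zero_iff_dvd _ p₁).mp
          push_cast
          rw [hu2cast₁ y, hy]
          ring
        have hd3 : ((p₃ : ℤ)) ∣ b - (u2 y).2.1 := by
          apply (ZMod.intCast_zmod_eq_zero_iff_dvd _ p₃).mp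
          push_cast
          rw [hu2cast₃ y, hy]
          ring
        rw [hN]
        exact ic2m.mul_dvd h2 (ic13.mul_dvd hd1 hd3)
  have hbij : Function.Bijective g := ⟨hinj, hsurj⟩
  have hqc : quadCount ((p₁ : ℤ) * (p₃ : ℤ))
      (fun p => 0 < p.2.1 ^ 2 - 4 * p.1 * p.2.2) = Nat.card (Quot r) := rfl
  have hcards : Nat.card (Quot r) =
      Nat.card {x : ZMod p₃ // x ^ 2 = ((p₁ : ℤ) : ZMod p₃)} +
      Nat.card {x : ZMod p₁ // x ^ 2 = ((1 : ℤ) : ZMod p₁)} *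
      Nat.card {x : ZMod p₃ // x ^ 2 = ((1 : ℤ) : ZMod p₃)} := by
    rw [← Nat.card_eq_of_bijective g hbij, Nat.card_sum, Nat.card_prod]
  have c1 : (Nat.card {x : ZMod p₃ // x ^ 2 = ((p₁ : ℤ) : ZMod p₃)} : ℤ) =
      legendreSym p₃ (p₁ : ℤ) + 1 := by
    have he : Nat.card {x : ZMod p₃ // x ^ 2 = ((p₁ : ℤ) : ZMod p₃)} =
        {x : ZMod p₃ | x ^ 2 = ((p₁ : ℤ) : ZMod p₃)}.toFinset.card := by
      rw [show Nat.card {x : ZMod p₃ // x ^ 2 = ((p₁ : ℤ) : ZMod p₃)} =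
        Nat.card {x : ZMod p₃ | x ^ 2 = ((p₁ : ℤ) : ZMod p₃)} from rfl,
        Nat.card_coe_set_eq, Set.ncard_eq_toFinset_card']
    rw [he]
    exact legendreSym.card_sqrts p₃ hp₃2 (p₁ : ℤ)
  have c2 : (Nat.card {x : ZMod p₁ // x ^ 2 = ((1 : ℤ) : ZMod p₁)} : ℤ) = 2 := by
    have he : Nat.card {x : ZMod p₁ // x ^ 2 = ((1 : ℤ) : ZMod p₁)} =
        {x : ZMod p₁ | x ^ 2 = ((1 : ℤ) : ZMod p₁)}.toFinset.card := by
      rw [show Nat.card {x : ZMod p₁ // x ^ 2 = ((1 : ℤ) : ZMod p₁)} =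
        Nat.card {x : ZMod p₁ | x ^ 2 = ((1 : ℤ) : ZMod p₁)} from rfl,
        Nat.card_coe_set_eq, Set.ncard_eq_toFinset_card']
    rw [he, legendreSym.card_sqrts p₁ hp₁2 (1 : ℤ), legendreSym.at_one _]
    norm_num
  have c3 : (Nat.card {x : ZMod p₃ // x ^ 2 = ((1 : ℤ) : ZMod p₃)} : ℤ) = 2 := by
    have he : Nat.card {x : ZMod p₃ // x ^ 2 = ((1 : ℤ) : ZMod p₃)} =
        {x : ZMod p₃ | x ^ 2 = ((1 : ℤ) : ZMod p₃)}.toFinset.card := by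
      rw [show Nat.card {x : ZMod p₃ // x ^ 2 = ((1 : ℤ) : ZMod p₃)} =
        Nat.card {x : ZMod p₃ | x ^ 2 = ((1 : ℤ) : ZMod p₃)} from rfl,
        Nat.card_coe_set_eq, Set.ncard_eq_toFinset_card']
    rw [he, legendreSym.card_sqrts p₃ hp₃2 (1 : ℤ), legendreSym.at_one _]
    norm_num
  rw [hqc, hcards]
  rw [Nat.cast_add, Nat.cast_mul, c1, c2, c3]
  ring
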